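/- Fix a time t, a mid-price s* ∈ ℝ, and a wealth level w ∈ ℝ. Let v : ℝ → ℝ be continuous, let U : ℝ³ → ℝ be continuously differentiable with partial derivatives U_t, U_L, U_C, and for B ≥ 0 set L(B) = ∫_{s*}^{s*+B} v(S) dS and C(B) = w − ∫_{s*}^{s*+B} S·v(S) dS. Suppose B* > 0 is a local maximum of the function F(B) := U(t, L(B), C(B)), that v(s*+B*) ≠ 0, and that U_C(t, L(B*), C(B*)) ≠ 0. Then s* + B* = U_L(t, L(B*), C(B*)) / U_C(t, L(B*), C(B*)); that is, the optimal highest limit price to buy the asset equals the ratio of the marginal utility of amount of asset to the marginal utility of consumption. -/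

import Mathlib

/-- static optimization, Theorem 4.1: at an interior local maximum `B* > 0`
of `F(B) = U(t, L(B), C(B))` with `v(s*+B*) ≠ 0` and `U_C ≠ 0` there,
the optimal highest limit price satisfies `s* + B* = U_L / U_C`. -/
theorem limit_order_static_optimality
    (t sStar w : ℝ) (v : ℝ → ℝ) (hv : Continuous v)
    (U Ut UL UC : ℝ → ℝ → ℝ → ℝ)
    (hU : ∀ p : ℝ × ℝ × ℝ, HasFDerivAt (fun q : ℝ × ℝ × ℝ => U q.1 q.2.1 q.2.2)
      (Ut p.1 p.2.1 p.2.2 • (ContinuousLinearMap.fst ℝ ℝ (ℝ × ℝ)) +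
       UL p.1 p.2.1 p.2.2 •
         ((ContinuousLinearMap.fst ℝ ℝ ℝ).comp (ContinuousLinearMap.snd ℝ ℝ (ℝ × ℝ))) +
       UC p.1 p.2.1 p.2.2 •
         ((ContinuousLinearMap.snd ℝ ℝ ℝ).comp (ContinuousLinearMap.snd ℝ ℝ (ℝ × ℝ)))) p)
    (hUt : Continuous fun p : ℝ × ℝ × ℝ => Ut p.1 p.2.1 p.2.2)
    (hUL : Continuous fun p : ℝ × ℝ × ℝ => UL p.1 p.2.1 p.2.2)
    (hUC : Continuous fun p : ℝ × ℝ × ℝ => UC p.1 p.2.1 p.2.2)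
    (L C F : ℝ → ℝ)
    (hL : ∀ B, L B = ∫ S in sStar..(sStar + B), v S)
    (hC : ∀ B, C B = w - ∫ S in sStar..(sStar + B), S * v S)
    (hF : ∀ B, F B = U t (L B) (C B))
    (Bstar : ℝ) (hBstar : 0 < Bstar) (hmax : IsLocalMax F Bstar)
    (hv0 : v (sStar + Bstar) ≠ 0)
    (hUC0 : UC t (L Bstar) (C Bstar) ≠ 0) :
    sStar + Bstar = UL t (L Bstar) (C Bstar) / UC t (L Bstar) (C Bstar) := by
  set x := sStar + Bstar with hx
  have hint : ∀ g : ℝ → ℝ, Continuous g →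
      HasDerivAt (fun B => ∫ S in sStar..(sStar + B), g S) (g x) Bstar := by
    intro g hg
    have h1 : HasDerivAt (fun y => ∫ S in sStar..y, g S) (g x) x :=
      intervalIntegral.integral_hasDerivAt_right (hg.intervalIntegrable _ _)
        hg.aestronglyMeasurable.stronglyMeasurableAtFilter hg.continuousAt
    have h2 : HasDerivAt (fun B : ℝ => sStar + B) 1 Bstar := by
      simpa using (hasDerivAt_id Bstar).const_add sStar
    have h3 := h1.comp Bstar h2
    rw [mul_one] at h3
    exact h3
  have hL' : HasDerivAt L (v x) Bstar := by
    have : (L : ℝ → ℝ) = fun B => ∫ S in sStar..(sStar + B), v S := funext hL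
    rw [this]; exact hint v hv
  have hC' : HasDerivAt C (-(x * v x)) Bstar := by
    have h : (C : ℝ → ℝ) = fun B => w - ∫ S in sStar..(sStar + B), id S * v S := by
      funext B; simp [hC B]
    rw [h]
    simpa using (hint (fun S => S * v S) (continuous_id.mul hv)).const_sub w
  have hq : HasDerivAt (fun B : ℝ => ((t, L B, C B) : ℝ × ℝ × ℝ))
      ((0 : ℝ), v x, -(x * v x)) Bstar :=
    HasDerivAt.prodMk (hasDerivAt_const Bstar t) (hL'.prodMk hC')
  have hF' : HasDerivAt F
      (UL t (L Bstar) (C Bstar) * v x + UC t (L Bstar) (C Bstar) * (-(x * v x))) Bstar := by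
    have h := (hU (t, L Bstar, C Bstar)).comp_hasDerivAt Bstar hq
    have hFe : (F : ℝ → ℝ) = fun B => U t (L B) (C B) := funext hF
    rw [hFe]
    refine h.congr_deriv ?_
    simp [ContinuousLinearMap.add_apply, ContinuousLinearMap.smul_apply]

  have h0 := hmax.hasDerivAt_eq_zero hF'
  have : (UL t (L Bstar) (C Bstar) - x * UC t (L Bstar) (C Bstar)) * v x = 0 := by
    linarith [h0]
  have h1 : UL t (L Bstar) (C Bstar) - x * UC t (L Bstar) (C Bstar) = 0 :=
    (mul_eq_zero.1 this).resolve_right hv0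
  field_simp
  linarith
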